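/- Let d ≥ 1 and let r ∈ ℝ^d satisfy r_n > 0 for all n and Σ_n r_n = 1. Define ℓ := √(Σ_{n=1}^d (ln(d·r_n))²), and for t ∈ [0,1] define q_n(t) := (1/d)(d·r_n)^t / Z(t), where Z(t) := Σ_{m=1}^d (1/d)(d·r_m)^t. Then the path t ↦ q(t) satisfies q_n(t) > 0, Σ_n q_n(t) = 1, q(0) = 𝟙/d, q(1) = r, and its length obeys ∫₀¹ √(Σ_{n=1}^d ((d/dt) ln q_n(t))²) dt ≤ (√d + 1)·ℓ. -/

import Mathlib

open Real

/-- Minkowski inequality for finite sums (triangle inequality in `ℓ²`). -/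
lemma sqrt_sum_sq_sub_le_aux {d : ℕ} (a b : Fin d → ℝ) :
    Real.sqrt (∑ n, (a n - b n)^2) ≤ Real.sqrt (∑ n, (a n)^2) + Real.sqrt (∑ n, (b n)^2) := by
  have h := norm_sub_le ((WithLp.equiv 2 (Fin d → ℝ)).symm a) ((WithLp.equiv 2 (Fin d → ℝ)).symm b)
  rw [EuclideanSpace.norm_eq, EuclideanSpace.norm_eq, EuclideanSpace.norm_eq] at h
  simpa [Real.norm_eq_abs, sq_abs] using h

/-- **Upper bound via the normalized geometric interpolation.**
For a strictly positive probability vector `r`, the normalized geometric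
interpolation `q t n = (1/d)(d r n)^t / Z t` between the uniform distribution and
`r` is a path of probability vectors from `𝟙/d` to `r` whose length in the
log-barrier metric is at most `(√d + 1) ℓ`, with `ℓ = √(∑ n, (log (d r n))²)`. -/
theorem geometric_interpolation_length_upper_bound
    (d : ℕ) (hd : 1 ≤ d) (r : Fin d → ℝ)
    (hr : ∀ n, 0 < r n) (hrsum : ∑ n, r n = 1)
    (Z : ℝ → ℝ)
    (hZ : ∀ t, Z t = ∑ m, (1 / (d : ℝ)) * ((d : ℝ) * r m) ^ t)
    (q : ℝ → Fin d → ℝ)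
    (hq : ∀ t n, q t n = (1 / (d : ℝ)) * ((d : ℝ) * r n) ^ t / Z t) :
    (∀ t ∈ Set.Icc (0:ℝ) 1, ∀ n, 0 < q t n) ∧
    (∀ t ∈ Set.Icc (0:ℝ) 1, ∑ n, q t n = 1) ∧
    (∀ n, q 0 n = 1 / d) ∧
    (∀ n, q 1 n = r n) ∧
    (∫ t in (0:ℝ)..1,
        Real.sqrt (∑ n, (deriv (fun s => Real.log (q s n)) t) ^ 2)) ≤
      (Real.sqrt d + 1) * Real.sqrt (∑ n, (Real.log ((d : ℝ) * r n)) ^ 2) := by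
  haveI : Nonempty (Fin d) := Fin.pos_iff_nonempty.mp hd
  have hd0 : (0:ℝ) < d := by exact_mod_cast hd
  have hdne : (d:ℝ) ≠ 0 := ne_of_gt hd0
  have hdr : ∀ n, 0 < (d:ℝ) * r n := fun n => mul_pos hd0 (hr n)
  set a : Fin d → ℝ := fun n => Real.log ((d:ℝ) * r n) with ha
  set L : ℝ := Real.sqrt (∑ n, (a n)^2) with hL
  have hZexp : ∀ t, Z t = ∑ m, (1/(d:ℝ)) * Real.exp (a m * t) := by
    intro t; rw [hZ]
    refine Finset.sum_congr rfl fun m _ => ?_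
    rw [Real.rpow_def_of_pos (hdr m)]
  have hZpos : ∀ t, 0 < Z t := by
    intro t; rw [hZexp]
    exact Finset.sum_pos (fun m _ => by positivity) Finset.univ_nonempty
  -- parts 1-4
  have part1 : ∀ t ∈ Set.Icc (0:ℝ) 1, ∀ n, 0 < q t n := by
    intro t _ n
    rw [hq]
    exact div_pos (mul_pos (by positivity) (Real.rpow_pos_of_pos (hdr n) t)) (hZpos t)
  have part2 : ∀ t ∈ Set.Icc (0:ℝ) 1, ∑ n, q t n = 1 := by
    intro t _
    calc ∑ n, q t n = (∑ n, (1/(d:ℝ)) * ((d:ℝ)*r n)^t) / Z t := by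
          rw [Finset.sum_div]; exact Finset.sum_congr rfl fun n _ => hq t n
      _ = 1 := by rw [← hZ t]; exact div_self (ne_of_gt (hZpos t))
  have hZ0 : Z 0 = 1 := by
    rw [hZ]
    simp only [Real.rpow_zero, mul_one, Finset.sum_const, Finset.card_univ, Fintype.card_fin,
      nsmul_eq_mul]
    field_simp
  have part3 : ∀ n, q 0 n = 1 / d := by
    intro n; rw [hq, hZ0, Real.rpow_zero, mul_one, div_one]
  have hZ1 : Z 1 = 1 := by
    rw [hZ]
    have h : ∀ m ∈ Finset.univ, (1/(d:ℝ)) * ((d:ℝ) * r m) ^ (1:ℝ) = r m := by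
      intro m _; rw [Real.rpow_one]; field_simp
    rw [Finset.sum_congr rfl h, hrsum]
  have part4 : ∀ n, q 1 n = r n := by
    intro n; rw [hq, hZ1, Real.rpow_one, div_one]; field_simp
  -- derivative of Z
  set W : ℝ → ℝ := fun t => ∑ m, (1/(d:ℝ)) * (Real.exp (a m * t) * a m) with hW
  have hZfun : Z = fun t => ∑ m, (1/(d:ℝ)) * Real.exp (a m * t) := funext hZexp
  have hZderiv : ∀ t, HasDerivAt Z (W t) t := by
    intro t
    rw [hZfun]
    refine HasDerivAt.fun_sum fun m _ => ?_
    have h1 : HasDerivAt (fun t : ℝ => a m * t) (a m) t := by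
      simpa using (hasDerivAt_id t).const_mul (a m)
    exact h1.exp.const_mul _
  -- derivative of log q
  have hqfun : ∀ n, (fun s => Real.log (q s n))
      = fun s => Real.log (1/(d:ℝ)) + a n * s - Real.log (Z s) := by
    intro n; funext s
    rw [hq, Real.rpow_def_of_pos (hdr n),
      Real.log_div (by positivity) (ne_of_gt (hZpos s)),
      Real.log_mul (by positivity) (Real.exp_ne_zero _), Real.log_exp]
  have hlogq : ∀ n t, HasDerivAt (fun s => Real.log (q s n)) (a n - W t / Z t) t := by
    intro n t
    rw [hqfun n]
    have h1 : HasDerivAt (fun s : ℝ => Real.log (1/(d:ℝ)) + a n * s) (a n) t := by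
      simpa only [id, zero_add, mul_one] using (hasDerivAt_const t (Real.log (1/(d:ℝ)))).fun_add ((hasDerivAt_id t).const_mul (a n))
    exact h1.sub ((hZderiv t).log (ne_of_gt (hZpos t)))
  -- bounds
  have habs : ∀ m, |a m| ≤ L := by
    intro m
    rw [hL, ← Real.sqrt_sq_eq_abs]
    exact Real.sqrt_le_sqrt (Finset.single_le_sum (fun i _ => sq_nonneg (a i)) (Finset.mem_univ m))
  have hLnn : 0 ≤ L := Real.sqrt_nonneg _
  have hWb : ∀ t, |W t / Z t| ≤ L := by
    intro t
    rw [abs_div, abs_of_pos (hZpos t), div_le_iff₀ (hZpos t)]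
    calc |W t| ≤ ∑ m, |(1/(d:ℝ)) * (Real.exp (a m * t) * a m)| := Finset.abs_sum_le_sum_abs _ _
      _ ≤ ∑ m, (1/(d:ℝ)) * Real.exp (a m * t) * L := by
          refine Finset.sum_le_sum fun m _ => ?_
          rw [abs_mul, abs_mul, abs_of_pos (by positivity : (0:ℝ) < 1/(d:ℝ)),
            abs_of_pos (Real.exp_pos _), mul_assoc]
          exact mul_le_mul_of_nonneg_left
            (mul_le_mul_of_nonneg_left (habs m) (Real.exp_pos _).le) (by positivity)
      _ = L * Z t := by rw [hZexp t, ← Finset.sum_mul]; exact mul_comm _ _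
  have hbound : ∀ t : ℝ, Real.sqrt (∑ n, (a n - W t / Z t)^2) ≤ (Real.sqrt d + 1) * L := by
    intro t
    have h1 := sqrt_sum_sq_sub_le_aux a (fun _ => W t / Z t)
    have h2 : Real.sqrt (∑ _n : Fin d, (W t / Z t)^2) = Real.sqrt d * |W t / Z t| := by
      rw [Finset.sum_const, Finset.card_univ, Fintype.card_fin, nsmul_eq_mul,
        Real.sqrt_mul (by positivity), Real.sqrt_sq_eq_abs]
    rw [h2] at h1
    have h3 : Real.sqrt d * |W t / Z t| ≤ Real.sqrt d * L :=
      mul_le_mul_of_nonneg_left (hWb t) (Real.sqrt_nonneg _)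
    nlinarith [Real.sqrt_nonneg (d:ℝ)]
  -- identify the integrand
  have hint : (fun t => Real.sqrt (∑ n, (deriv (fun s => Real.log (q s n)) t) ^ 2))
      = fun t => Real.sqrt (∑ n, (a n - W t / Z t)^2) := by
    funext t
    congr 1
    exact Finset.sum_congr rfl fun n _ => by rw [(hlogq n t).deriv]
  -- continuity and integral bound
  have hZc : Continuous Z := by
    rw [hZfun]
    exact continuous_finset_sum _ fun m _ =>
      continuous_const.mul (Real.continuous_exp.comp (continuous_const.mul continuous_id))
  have hWc : Continuous W := by
    rw [hW]
    exact continuous_finset_sum _ fun m _ => continuous_const.mul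
      ((Real.continuous_exp.comp (continuous_const.mul continuous_id)).mul continuous_const)
  have hfc : Continuous fun t => Real.sqrt (∑ n, (a n - W t / Z t)^2) :=
    Real.continuous_sqrt.comp (continuous_finset_sum _ fun n _ =>
      (continuous_const.sub (hWc.div hZc fun t => ne_of_gt (hZpos t))).pow 2)
  have part5 : (∫ t in (0:ℝ)..1,
      Real.sqrt (∑ n, (deriv (fun s => Real.log (q s n)) t) ^ 2)) ≤ (Real.sqrt d + 1) * L := by
    rw [hint]
    have h1 : (∫ t in (0:ℝ)..1, Real.sqrt (∑ n, (a n - W t / Z t)^2))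
        ≤ ∫ _t in (0:ℝ)..1, (Real.sqrt d + 1) * L := by
      refine intervalIntegral.integral_mono_on (by norm_num)
        (hfc.intervalIntegrable 0 1) (intervalIntegrable_const) ?_
      intro t _; exact hbound t
    simpa using h1
  exact ⟨part1, part2, part3, part4, part5⟩
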